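/- Let F be a differential field with constants K. If M ∈ F^{n×n} satisfies M M' = M' M and M is diagonalizable by a similarity over F, then M is diagonalizable by a similarity with an invertible constant matrix T ∈ K^{n×n}. -/

import Mathlib

open scoped Matrix
set_option maxHeartbeats 1600000
set_option synthInstance.maxHeartbeats 400000

def IsDeriv {F : Type*} [Field F] (d : F → F) : Prop :=
  (∀ a b, d (a + b) = d a + d b) ∧ (∀ a b, d (a * b) = d a * b + a * d b)

section Basic
variable {F : Type*} [Field F] {d : F → F}

theorem IsDeriv.map_zero (hd : IsDeriv d) : d 0 = 0 := by
  have h := hd.1 0 0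
  rw [add_zero] at h
  exact (right_eq_add.mp h)

theorem IsDeriv.map_one (hd : IsDeriv d) : d 1 = 0 := by
  have h := hd.2 1 1
  rw [mul_one, mul_one, one_mul] at h
  exact (right_eq_add.mp h)

theorem IsDeriv.map_neg (hd : IsDeriv d) (a : F) : d (-a) = -d a := by
  have h := hd.1 a (-a)
  rw [add_neg_cancel, hd.map_zero] at h
  exact eq_neg_of_add_eq_zero_right h.symm

theorem IsDeriv.map_inv (hd : IsDeriv d) (a : F) (ha : d a = 0) : d a⁻¹ = 0 := by
  rcases eq_or_ne a 0 with rfl | h0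
  · rw [inv_zero, hd.map_zero]
  · have h := hd.2 a a⁻¹
    rw [mul_inv_cancel₀ h0, hd.map_one, ha, zero_mul, zero_add] at h
    exact (mul_eq_zero.mp h.symm).resolve_left h0

end Basic

section MatrixDeriv
variable {F : Type*} [Field F] {d : F → F} {n : ℕ}

theorem IsDeriv.matMap_mul (hd : IsDeriv d) (A B : Matrix (Fin n) (Fin n) F) :
    (A * B).map d = A.map d * B + A * B.map d := by
  ext i j
  have hsum : d (∑ k, A i k * B k j) = ∑ k, d (A i k * B k j) :=
    map_sum (AddMonoidHom.mk' d hd.1) _ _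
  simp only [Matrix.map_apply, Matrix.mul_apply, Matrix.add_apply, hsum]
  rw [← Finset.sum_add_distrib]
  exact Finset.sum_congr rfl fun k _ => hd.2 _ _

theorem IsDeriv.matMap_smul (hd : IsDeriv d) (c : F) (A : Matrix (Fin n) (Fin n) F) :
    (c • A).map d = d c • A + c • A.map d := by
  ext i j
  simp only [Matrix.map_apply, Matrix.smul_apply, Matrix.add_apply, smul_eq_mul]
  exact hd.2 _ _

end MatrixDeriv

/-- The subfield of constants of a derivation. -/
def constSubfield {F : Type*} [Field F] (d : F → F) (hd : IsDeriv d) : Subfield F where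
  carrier := {x | d x = 0}
  mul_mem' := by
    intro a b ha hb
    simp only [Set.mem_setOf_eq] at *
    rw [hd.2, ha, hb, zero_mul, mul_zero, add_zero]
  one_mem' := hd.map_one
  add_mem' := by
    intro a b ha hb
    simp only [Set.mem_setOf_eq] at *
    rw [hd.1, ha, hb, add_zero]
  zero_mem' := hd.map_zero
  neg_mem' := by
    intro a ha
    simp only [Set.mem_setOf_eq] at *
    rw [hd.map_neg, ha, neg_zero]
  inv_mem' := fun a ha => hd.map_inv a ha

section Proj
variable {F : Type*} [Field F] [DecidableEq F] {n : ℕ}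

/-- Spectral projection attached to the value `c`. -/
noncomputable def Pmat (S : Matrix (Fin n) (Fin n) F) (δ : Fin n → F) (c : F) :
    Matrix (Fin n) (Fin n) F :=
  S * Matrix.diagonal (fun i => if δ i = c then 1 else 0) * S⁻¹

variable {S M : Matrix (Fin n) (Fin n) F} {δ : Fin n → F}

omit [DecidableEq F] in
theorem sandwich (hS' : S⁻¹ * S = 1) (A B : Matrix (Fin n) (Fin n) F) :
    (S * A * S⁻¹) * (S * B * S⁻¹) = S * (A * B) * S⁻¹ := by
  have h : S⁻¹ * (S * (B * S⁻¹)) = B * S⁻¹ := by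
    rw [← Matrix.mul_assoc, hS', Matrix.one_mul]
  simp only [Matrix.mul_assoc, h]

theorem Pmat_mul_Pmat (hS' : S⁻¹ * S = 1) (c c' : F) :
    Pmat S δ c * Pmat S δ c' = if c = c' then Pmat S δ c else 0 := by
  unfold Pmat
  rw [sandwich hS', Matrix.diagonal_mul_diagonal]
  by_cases hcc : c = c'
  · subst hcc
    rw [if_pos rfl]
    have : (fun i => (if δ i = c then (1:F) else 0) * (if δ i = c then 1 else 0)) =
        fun i => if δ i = c then (1:F) else 0 := by
      funext i
      by_cases h1 : δ i = c <;> simp [h1]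
    rw [this]
  · rw [if_neg hcc]
    have : (fun i => (if δ i = c then (1:F) else 0) * (if δ i = c' then 1 else 0)) =
        fun _ => (0:F) := by
      funext i
      by_cases h1 : δ i = c
      · rw [if_pos h1, if_neg (h1 ▸ hcc), mul_zero]
      · rw [if_neg h1, zero_mul]
    rw [this, Matrix.diagonal_zero, Matrix.mul_zero, Matrix.zero_mul]

theorem Pmat_idem (hS' : S⁻¹ * S = 1) (c : F) : Pmat S δ c * Pmat S δ c = Pmat S δ c := by
  simpa using Pmat_mul_Pmat (S := S) (δ := δ) hS' c c

theorem Pmat_sum (hS : S * S⁻¹ = 1) :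
    ∑ c ∈ Finset.image δ Finset.univ, Pmat S δ c = 1 := by
  unfold Pmat
  have h1 : ∑ c ∈ Finset.image δ Finset.univ,
      S * Matrix.diagonal (fun i => if δ i = c then 1 else 0) * S⁻¹ =
      S * (∑ c ∈ Finset.image δ Finset.univ,
        Matrix.diagonal (fun i => if δ i = c then (1:F) else 0)) * S⁻¹ := by
    rw [Finset.mul_sum, Finset.sum_mul]
  rw [h1]
  have h2 : ∑ c ∈ Finset.image δ Finset.univ,
      Matrix.diagonal (fun i => if δ i = c then (1:F) else 0) = 1 := by
    ext i j
    rw [Matrix.sum_apply]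
    by_cases hij : i = j
    · subst hij
      simp only [Matrix.diagonal_apply_eq, Matrix.one_apply_eq]
      rw [Finset.sum_ite_eq (Finset.image δ Finset.univ) (δ i) (fun _ => (1:F))]
      simp
    · simp only [Matrix.diagonal_apply_ne _ hij, Matrix.one_apply_ne hij,
        Finset.sum_const_zero]
  rw [h2, Matrix.mul_one, hS]

theorem mul_Pmat (hS' : S⁻¹ * S = 1) (hM : M = S * Matrix.diagonal δ * S⁻¹) (c : F) :
    M * Pmat S δ c = c • Pmat S δ c := by
  rw [hM]
  unfold Pmat
  rw [sandwich hS', Matrix.diagonal_mul_diagonal]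
  have : (fun i => δ i * (if δ i = c then (1:F) else 0)) =
      fun i => c * (if δ i = c then (1:F) else 0) := by
    funext i
    by_cases h1 : δ i = c <;> simp [h1]
  rw [this]
  have h2 : Matrix.diagonal (fun i => c * (if δ i = c then (1:F) else 0)) =
      c • Matrix.diagonal (fun i => if δ i = c then (1:F) else 0) := by
    rw [← Matrix.diagonal_smul]
    congr 1
  rw [h2, Matrix.mul_smul, Matrix.smul_mul]

theorem Pmat_mul (hS' : S⁻¹ * S = 1) (hM : M = S * Matrix.diagonal δ * S⁻¹) (c : F) :
    Pmat S δ c * M = c • Pmat S δ c := by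
  rw [hM]
  unfold Pmat
  rw [sandwich hS', Matrix.diagonal_mul_diagonal]
  have : (fun i => (if δ i = c then (1:F) else 0) * δ i) =
      fun i => c * (if δ i = c then (1:F) else 0) := by
    funext i
    by_cases h1 : δ i = c <;> simp [h1]
  rw [this]
  have h2 : Matrix.diagonal (fun i => c * (if δ i = c then (1:F) else 0)) =
      c • Matrix.diagonal (fun i => if δ i = c then (1:F) else 0) := by
    rw [← Matrix.diagonal_smul]
    congr 1
  rw [h2, Matrix.mul_smul, Matrix.smul_mul]

theorem Pmat_junk (c : F) (hc : c ∉ Finset.image δ Finset.univ) : Pmat S δ c = 0 := by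
  unfold Pmat
  have : (fun i => if δ i = c then (1:F) else 0) = fun _ => (0:F) := by
    funext i
    rw [if_neg fun h => hc (Finset.mem_image.mpr ⟨i, Finset.mem_univ i, h⟩)]
  rw [this, Matrix.diagonal_zero, Matrix.mul_zero, Matrix.zero_mul]

omit [DecidableEq F] in
theorem smul_cancel_ne {c c' : F} (h : c ≠ c') {X : Matrix (Fin n) (Fin n) F}
    (hX : c • X = c' • X) : X = 0 := by
  have hne : c - c' ≠ 0 := sub_ne_zero.mpr h
  have h0 : (c - c') • X = 0 := by rw [sub_smul, hX, sub_self]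
  calc X = (c - c')⁻¹ • ((c - c') • X) := by
        rw [smul_smul, inv_mul_cancel₀ hne, one_smul]
    _ = 0 := by rw [h0, smul_zero]

variable {d : F → F}

theorem stepA (hd : IsDeriv d) (hS' : S⁻¹ * S = 1)
    (hM : M = S * Matrix.diagonal δ * S⁻¹) (hcomm : M * M.map d = M.map d * M)
    {c c' : F} (h : c ≠ c') : Pmat S δ c * M.map d * Pmat S δ c' = 0 := by
  apply smul_cancel_ne h
  calc c • (Pmat S δ c * M.map d * Pmat S δ c')
      = (c • Pmat S δ c) * M.map d * Pmat S δ c' := by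
        rw [Matrix.smul_mul, Matrix.smul_mul]
    _ = Pmat S δ c * M * M.map d * Pmat S δ c' := by rw [← Pmat_mul hS' hM]
    _ = Pmat S δ c * M.map d * (M * Pmat S δ c') := by
        rw [Matrix.mul_assoc (Pmat S δ c) M, hcomm, ← Matrix.mul_assoc,
          Matrix.mul_assoc (Pmat S δ c * M.map d)]
    _ = Pmat S δ c * M.map d * (c' • Pmat S δ c') := by rw [mul_Pmat hS' hM]
    _ = c' • (Pmat S δ c * M.map d * Pmat S δ c') := by rw [Matrix.mul_smul]

theorem stepB (hd : IsDeriv d) (hS' : S⁻¹ * S = 1)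
    (hM : M = S * Matrix.diagonal δ * S⁻¹) (hcomm : M * M.map d = M.map d * M)
    {c c' : F} (h : c ≠ c') : Pmat S δ c' * (Pmat S δ c).map d = 0 := by
  have e1 : M.map d * Pmat S δ c + M * (Pmat S δ c).map d =
      d c • Pmat S δ c + c • (Pmat S δ c).map d := by
    rw [← hd.matMap_mul, ← hd.matMap_smul, mul_Pmat hS' hM]
  have e2 := congrArg (fun X => Pmat S δ c' * X) e1
  simp only [Matrix.mul_add, Matrix.mul_smul] at e2
  rw [← Matrix.mul_assoc, ← Matrix.mul_assoc, stepA hd hS' hM hcomm (Ne.symm h),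
    zero_add, Pmat_mul hS' hM, Matrix.smul_mul,
    Pmat_mul_Pmat hS' c' c, if_neg (Ne.symm h), smul_zero, zero_add] at e2
  exact smul_cancel_ne (Ne.symm h) e2

theorem stepC (hd : IsDeriv d) (hS' : S⁻¹ * S = 1)
    (hM : M = S * Matrix.diagonal δ * S⁻¹) (hcomm : M * M.map d = M.map d * M)
    {c c' : F} (h : c ≠ c') : (Pmat S δ c).map d * Pmat S δ c' = 0 := by
  have e1 : (Pmat S δ c).map d * M + Pmat S δ c * M.map d =
      d c • Pmat S δ c + c • (Pmat S δ c).map d := by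
    rw [← hd.matMap_mul, ← hd.matMap_smul, Pmat_mul hS' hM]
  have e2 := congrArg (fun X => X * Pmat S δ c') e1
  simp only [Matrix.add_mul, Matrix.smul_mul] at e2
  rw [stepA hd hS' hM hcomm h, add_zero,
    Matrix.mul_assoc ((Pmat S δ c).map d), mul_Pmat hS' hM, Matrix.mul_smul,
    Pmat_mul_Pmat hS' c c', if_neg h, smul_zero, zero_add] at e2
  exact smul_cancel_ne (Ne.symm h) e2

theorem stepD (hd : IsDeriv d) (hS : S * S⁻¹ = 1) (hS' : S⁻¹ * S = 1)
    (hM : M = S * Matrix.diagonal δ * S⁻¹) (hcomm : M * M.map d = M.map d * M)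
    (c : F) : (Pmat S δ c).map d = 0 := by
  by_cases hc : c ∈ Finset.image δ Finset.univ
  · have hR : (Pmat S δ c).map d * Pmat S δ c = (Pmat S δ c).map d := by
      calc (Pmat S δ c).map d * Pmat S δ c
          = ∑ c' ∈ Finset.image δ Finset.univ, (Pmat S δ c).map d * Pmat S δ c' := by
            rw [Finset.sum_eq_single_of_mem c hc
              (fun c' _ hne => stepC hd hS' hM hcomm (Ne.symm hne))]
        _ = (Pmat S δ c).map d * ∑ c' ∈ Finset.image δ Finset.univ, Pmat S δ c' := by
            rw [Finset.mul_sum]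
        _ = (Pmat S δ c).map d := by rw [Pmat_sum hS, Matrix.mul_one]
    have hL : Pmat S δ c * (Pmat S δ c).map d = (Pmat S δ c).map d := by
      calc Pmat S δ c * (Pmat S δ c).map d
          = ∑ c' ∈ Finset.image δ Finset.univ, Pmat S δ c' * (Pmat S δ c).map d := by
            rw [Finset.sum_eq_single_of_mem c hc
              (fun c' _ hne => stepB hd hS' hM hcomm (Ne.symm hne))]
        _ = (∑ c' ∈ Finset.image δ Finset.univ, Pmat S δ c') * (Pmat S δ c).map d := by
            rw [Finset.sum_mul]
        _ = (Pmat S δ c).map d := by rw [Pmat_sum hS, Matrix.one_mul]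
    have e : (Pmat S δ c).map d * Pmat S δ c + Pmat S δ c * (Pmat S δ c).map d =
        (Pmat S δ c).map d := by
      rw [← hd.matMap_mul, Pmat_idem hS']
    rw [hR, hL] at e
    exact add_eq_right.mp e
  · rw [Pmat_junk c hc]
    exact Matrix.map_zero d hd.map_zero


end Proj

/-- If `M M' = M' M` and `M` is diagonalizable over `F`, then `M` is
diagonalizable by an invertible matrix with constant entries. -/
theorem diagonalizable_implies_constant_diagonalizable {F : Type*} [Field F]
    (d : F → F) (hd : IsDeriv d)
    {n : ℕ} (M : Matrix (Fin n) (Fin n) F)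
    (hcomm : M * M.map d = M.map d * M)
    (hdiag : ∃ S : Matrix (Fin n) (Fin n) F, IsUnit S ∧ (S⁻¹ * M * S).IsDiag) :
    ∃ T : Matrix (Fin n) (Fin n) F, IsUnit T ∧ (∀ p q, d (T p q) = 0) ∧
      (T⁻¹ * M * T).IsDiag := by
  classical
  obtain ⟨S, hSu, hdg⟩ := hdiag
  have hSd : IsUnit S.det := (Matrix.isUnit_iff_isUnit_det S).mp hSu
  have hS : S * S⁻¹ = 1 := Matrix.mul_nonsing_inv S hSd
  have hS' : S⁻¹ * S = 1 := Matrix.nonsing_inv_mul S hSd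
  set δ : Fin n → F := (S⁻¹ * M * S).diag with hδdef
  have hDdiag : Matrix.diagonal δ = S⁻¹ * M * S := hdg.diagonal_diag
  have hM : M = S * Matrix.diagonal δ * S⁻¹ := by
    rw [hDdiag]
    have h : S * (S⁻¹ * M * S) * S⁻¹ = S * (S⁻¹ * (M * (S * S⁻¹))) := by
      simp only [Matrix.mul_assoc]
    rw [h, hS, Matrix.mul_one, ← Matrix.mul_assoc, hS, Matrix.one_mul]
  -- constants
  set K : Subfield F := constSubfield d hd with hKdef
  have hPd : ∀ c, (Pmat S δ c).map d = 0 := stepD hd hS hS' hM hcomm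
  have hPentry : ∀ c i j, d (Pmat S δ c i j) = 0 := by
    intro c i j
    have h := congrFun (congrFun (hPd c) i) j
    simpa [Matrix.map_apply] using h
  set Q : F → Matrix (Fin n) (Fin n) K :=
    fun c => Matrix.of fun i j => (⟨Pmat S δ c i j, hPentry c i j⟩ : K) with hQdef
  set Φ : Matrix (Fin n) (Fin n) K →+* Matrix (Fin n) (Fin n) F :=
    (K.subtype).mapMatrix with hΦdef
  have hΦinj : Function.Injective Φ := by
    intro A B h
    ext i j
    have h2 := congrFun (congrFun h i) j
    exact h2
  have hΦQ : ∀ c, Φ (Q c) = Pmat S δ c := by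
    intro c
    ext i j
    rfl
  have hQidem : ∀ c, Q c * Q c = Q c := by
    intro c
    apply hΦinj
    rw [map_mul, hΦQ]
    exact Pmat_idem hS' c
  have hQsum : ∑ c ∈ Finset.image δ Finset.univ, Q c = 1 := by
    apply hΦinj
    rw [map_sum, map_one]
    simp only [hΦQ]
    exact Pmat_sum hS
  -- spanning set of constant eigenvectors
  set s : Set (Fin n → K) :=
    ⋃ c ∈ (Finset.image δ Finset.univ : Finset F), {v | Q c *ᵥ v = v} with hsdef
  have hspan : Submodule.span K s = ⊤ := by
    rw [Submodule.eq_top_iff']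
    intro x
    have hx : x = ∑ c ∈ Finset.image δ Finset.univ, Q c *ᵥ x := by
      have hsum : (∑ c ∈ Finset.image δ Finset.univ, Q c) *ᵥ x =
          ∑ c ∈ Finset.image δ Finset.univ, Q c *ᵥ x :=
        map_sum (AddMonoidHom.mk' (fun A : Matrix (Fin n) (Fin n) K => A *ᵥ x)
          (fun A B => Matrix.add_mulVec A B x)) (fun c => Q c) (Finset.image δ Finset.univ)
      rw [hQsum, Matrix.one_mulVec] at hsum
      exact hsum
    rw [hx]
    refine Submodule.sum_mem _ fun c hc => Submodule.subset_span ?_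
    refine Set.mem_biUnion hc ?_
    show Q c *ᵥ (Q c *ᵥ x) = Q c *ᵥ x
    rw [Matrix.mulVec_mulVec, hQidem c]
  obtain ⟨b, hbs, hbspan, hbind⟩ := exists_linearIndependent K s
  have hbspan' : Submodule.span K b = ⊤ := by rw [hbspan, hspan]
  let bas : Module.Basis b K (Fin n → K) := Module.Basis.mk hbind (by
    rw [Subtype.range_coe]
    exact hbspan'.ge)
  haveI : Fintype b := FiniteDimensional.fintypeBasisIndex bas
  have hcard : Fintype.card b = n := by
    have h1 := Module.finrank_eq_card_basis bas
    rw [Module.finrank_fin_fun K] at h1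
    exact h1.symm
  let e : b ≃ Fin n := Fintype.equivFinOfCardEq hcard
  let bas2 : Module.Basis (Fin n) K (Fin n → K) := bas.reindex e
  set v : Fin n → (Fin n → K) := fun j => bas2 j with hvdef
  have hvs : ∀ j, ∃ c, c ∈ Finset.image δ Finset.univ ∧ Q c *ᵥ v j = v j := by
    intro j
    have hmem : v j ∈ s := by
      have : v j = ((e.symm j : b) : Fin n → K) := by
        rw [hvdef]
        simp [bas2, Module.Basis.reindex_apply, bas, Module.Basis.mk_apply]
      rw [this]
      exact hbs (e.symm j).2
    rw [hsdef] at hmem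
    obtain ⟨c, hc, hv⟩ := Set.mem_iUnion₂.mp hmem
    exact ⟨c, hc, hv⟩
  choose μ hμvals hμ using hvs
  set T₀ : Matrix (Fin n) (Fin n) K := Matrix.of fun i j => v j i with hT₀def
  set T : Matrix (Fin n) (Fin n) F := Φ T₀ with hTdef
  have hT₀eq : T₀ = (Pi.basisFun K (Fin n)).toMatrix ⇑bas2 := by
    ext i j
    rw [Module.Basis.toMatrix_apply, Pi.basisFun_repr]
    rfl
  have hT₀u : IsUnit T₀ := by
    rw [hT₀eq]
    have := Module.Basis.invertibleToMatrix (Pi.basisFun K (Fin n)) bas2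
    exact isUnit_of_invertible _
  have hTu : IsUnit T := hT₀u.map Φ
  have hTd : IsUnit T.det := (Matrix.isUnit_iff_isUnit_det T).mp hTu
  have hconst : ∀ p q, d (T p q) = 0 := fun p q => (v q p).2
  have hPcol : ∀ j, Pmat S δ (μ j) *ᵥ (fun i => T i j) = fun i => T i j := by
    intro j
    funext i
    have h := congrFun (hμ j) i
    simp only [Matrix.mulVec, dotProduct] at h
    have h2 := congrArg (fun a : K => (a : F)) h
    push_cast at h2
    simp only [Matrix.mulVec, dotProduct]
    exact h2
  have hMT : M * T = T * Matrix.diagonal μ := by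
    ext i j
    have hcol : (M *ᵥ fun k => T k j) = μ j • (fun k => T k j) := by
      conv_lhs => rw [← hPcol j]
      rw [Matrix.mulVec_mulVec, mul_Pmat hS' hM, Matrix.smul_mulVec, hPcol j]
    have hcoli := congrFun hcol i
    rw [Matrix.mul_apply, Matrix.mul_diagonal]
    simp only [Matrix.mulVec, dotProduct, Pi.smul_apply, smul_eq_mul] at hcoli
    rw [hcoli, mul_comm]
  refine ⟨T, hTu, hconst, ?_⟩
  have hfin : T⁻¹ * M * T = Matrix.diagonal μ := by
    rw [Matrix.mul_assoc, hMT, ← Matrix.mul_assoc, Matrix.nonsing_inv_mul T hTd,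
      Matrix.one_mul]
  rw [hfin]
  exact Matrix.isDiag_diagonal μ
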